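/- Let k ≥ 4 be an even integer and let D be a k-quasi-transitive digraph. If v is a (k+2)-king of D but not a (k+1)-king, then there exists a vertex u with d(v,u) = k+2 which is a 2-king of D. Moreover, the set S = { w ∈ V(D) : d(v,w) = k+2 } induces a semicomplete subdigraph of D. -/

import Mathlib

variable {V : Type*}

/-- A directed path of length `n` from `u` to `v` in the digraph with arc relation `A`:
a sequence of `n + 1` pairwise distinct vertices, consecutive ones joined by arcs. -/
def HasPathN (A : V → V → Prop) (u v : V) (n : ℕ) : Prop :=
  ∃ f : Fin (n + 1) → V, Function.Injective f ∧ f 0 = u ∧ f (Fin.last n) = v ∧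
    ∀ i : Fin n, A (f i.castSucc) (f i.succ)

/-- The distance from `u` to `v`: the length of a shortest directed path from `u` to `v`,
`⊤` if there is no such path. -/
noncomputable def ddist (A : V → V → Prop) (u v : V) : ℕ∞ :=
  sInf {n : ℕ∞ | ∃ m : ℕ, n = (m : ℕ∞) ∧ HasPathN A u v m}

/-- `D` is `k`-quasi-transitive if for every directed path `(v_0, …, v_k)` of length `k`,
either `(v_0, v_k)` or `(v_k, v_0)` is an arc. -/
def KQuasiTrans (A : V → V → Prop) (k : ℕ) : Prop :=
  ∀ u v : V, HasPathN A u v k → A u v ∨ A v u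

/-- A vertex `v` is an `r`-king if every vertex is within distance `r` from `v`. -/
def IsRKing (A : V → V → Prop) (r : ℕ) (v : V) : Prop :=
  ∀ u : V, ddist A v u ≤ (r : ℕ∞)

/-- `u` reaches `v` by a directed path. -/
def Reaches (A : V → V → Prop) (u v : V) : Prop :=
  ∃ n : ℕ, HasPathN A u v n

/-- A strong component: the set of all vertices mutually reachable with some vertex. -/
def IsStrongComponent (A : V → V → Prop) (S : Set V) : Prop :=
  ∃ v : V, S = {u | Reaches A u v ∧ Reaches A v u}

/-- An initial strong component: a strong component receiving no arcs from outside. -/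
def IsInitialStrongComponent (A : V → V → Prop) (S : Set V) : Prop :=
  IsStrongComponent A S ∧ ∀ u v : V, u ∉ S → v ∈ S → ¬ A u v

/-- The out-degree of `v` in `D`. -/
noncomputable def outDeg (A : V → V → Prop) (v : V) : ℕ :=
  {u : V | A v u}.ncard

/-- The out-degree of `v` in the subdigraph of `D` induced by `C`. -/
noncomputable def outDegIn (A : V → V → Prop) (C : Set V) (v : V) : ℕ :=
  {u ∈ C | A v u}.ncard

/-- The maximum out-degree of the subdigraph induced by `C`. -/
noncomputable def maxOutDegIn (A : V → V → Prop) (C : Set V) : ℕ :=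
  sSup (outDegIn A C '' C)

section Helpers

variable {A : V → V → Prop}

def NatChain (A : V → V → Prop) (F : ℕ → V) (n : ℕ) : Prop :=
  ∀ j, j < n → A (F j) (F (j+1))

def NatInjOn (F : ℕ → V) (n : ℕ) : Prop :=
  ∀ i, i ≤ n → ∀ j, j ≤ n → F i = F j → i = j

lemma hasPathN_of_nat {F : ℕ → V} {n : ℕ}
    (hc : NatChain A F n) (hi : NatInjOn F n) :
    HasPathN A (F 0) (F n) n := by
  refine ⟨fun i => F i.1, ?_, rfl, rfl, ?_⟩
  · intro i j h
    exact Fin.ext (hi i.1 (by omega) j.1 (by omega) h)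
  · intro i
    have := hc i.1 i.2
    simpa using this

lemma nat_of_hasPathN {u z : V} {n : ℕ} (h : HasPathN A u z n) :
    ∃ F : ℕ → V, F 0 = u ∧ F n = z ∧ NatChain A F n ∧ NatInjOn F n := by
  obtain ⟨f, hinj, h0, hl, hc⟩ := h
  refine ⟨fun j => f ⟨min j n, by omega⟩, ?_, ?_, ?_, ?_⟩
  · show f ⟨min 0 n, by omega⟩ = u
    have e : (⟨min 0 n, by omega⟩ : Fin (n+1)) = 0 := by
      apply Fin.ext; simp
    rw [e]; exact h0
  · show f ⟨min n n, by omega⟩ = z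
    have e : (⟨min n n, by omega⟩ : Fin (n+1)) = Fin.last n := by
      apply Fin.ext; simp [Fin.last]
    rw [e]; exact hl
  · intro j hj
    have := hc ⟨j, hj⟩
    convert this using 2
    · apply Fin.ext; simp [Fin.castSucc]; omega
    · apply Fin.ext; simp [Fin.succ]; omega
  · intro i hi j hj he
    have h2 := congrArg Fin.val (hinj he)
    simp only [] at h2
    omega

lemma ddist_le_of_path {u z : V} {m : ℕ} (h : HasPathN A u z m) :
    ddist A u z ≤ (m : ℕ∞) := by
  unfold ddist
  exact sInf_le ⟨m, rfl, h⟩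

lemma exists_path_of_ddist_le {u z : V} {c : ℕ} (h : ddist A u z ≤ (c : ℕ∞)) :
    ∃ m, m ≤ c ∧ HasPathN A u z m ∧ ddist A u z = (m : ℕ∞) := by
  classical
  by_cases hne : ∃ m : ℕ, HasPathN A u z m
  · set T := {m : ℕ | HasPathN A u z m} with hT
    have hTne : T.Nonempty := hne
    have hmem : sInf T ∈ T := Nat.sInf_mem hTne
    have heq : ddist A u z = ((sInf T : ℕ) : ℕ∞) := by
      apply le_antisymm
      · unfold ddist
        exact sInf_le ⟨_, rfl, hmem⟩
      · unfold ddist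
        apply le_sInf
        rintro n ⟨m, rfl, hm⟩
        exact_mod_cast Nat.sInf_le hm
    refine ⟨sInf T, ?_, hmem, heq⟩
    rw [heq] at h
    exact_mod_cast h
  · exfalso
    push_neg at hne
    have : ddist A u z = ⊤ := by
      unfold ddist
      rw [sInf_eq_top]
      intro n hn
      exfalso
      revert hn
      change n ∉ _
      simp only [Set.mem_setOf_eq, Set.mem_empty_iff_false, iff_false, not_exists]
      intro m ⟨_, hp⟩
      exact hne m hp
    rw [this] at h
    have : (c : ℕ∞) = ⊤ := top_le_iff.mp h
    exact (ENat.coe_ne_top c) this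

lemma path_zero (u : V) : HasPathN A u u 0 :=
  ⟨fun _ => u, fun a b _ => Fin.ext (by omega), rfl, rfl, fun i => i.elim0⟩

lemma ddist_self (u : V) : ddist A u u = 0 :=
  le_antisymm (by simpa using ddist_le_of_path (path_zero u)) (zero_le)

lemma path_one {u z : V} (h : A u z) (hne : u ≠ z) : HasPathN A u z 1 := by
  have := hasPathN_of_nat (A := A) (F := fun j => if j = 0 then u else z) (n := 1)
    (by intro j hj; simp only []; rw [if_pos (by omega), if_neg (by omega)]; exact h)
    (by intro i hi j hj he; try simp only [] at he; split_ifs at he <;> first | omega | exact absurd he hne | exact absurd he.symm hne)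
  simpa using this

lemma path_two {u y z : V} (h1 : A u y) (h2 : A y z)
    (huy : u ≠ y) (hyz : y ≠ z) (huz : u ≠ z) : HasPathN A u z 2 := by
  have := hasPathN_of_nat (A := A)
      (F := fun j => if j = 0 then u else if j = 1 then y else z) (n := 2)
    (by
      intro j hj
      interval_cases j
      · simpa using h1
      · simpa using h2)
    (by
      intro i hi j hj he
      interval_cases i <;> interval_cases j <;> simp_all)
  simpa using this

lemma subpath_nat {F : ℕ → V} {n : ℕ} (hch : NatChain A F n) (hinj : NatInjOn F n)
    {a b : ℕ} (hab : a ≤ b) (hb : b ≤ n) : HasPathN A (F a) (F b) (b - a) := by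
  have := hasPathN_of_nat (A := A) (F := fun j => F (a + j)) (n := b - a)
    (by
      intro j hj
      show A (F (a + j)) (F (a + (j+1)))
      have e : a + (j+1) = (a+j) + 1 := by omega
      rw [e]
      exact hch (a+j) (by omega))
    (by
      intro i hi j hj he
      have := hinj (a+i) (by omega) (a+j) (by omega) he
      omega)
  have e1 : a + (b - a) = b := by omega
  simpa [e1] using this

lemma snoc_ddist {u x w : V} {n : ℕ} (h : HasPathN A u x n) (ha : A x w) :
    ddist A u w ≤ ((n+1 : ℕ) : ℕ∞) := by
  obtain ⟨F, hF0, hFn, hch, hinj⟩ := nat_of_hasPathN h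
  by_cases hw : ∃ j, j ≤ n ∧ F j = w
  · obtain ⟨j, hj, hje⟩ := hw
    have hp := subpath_nat hch hinj (Nat.zero_le j) hj
    rw [hF0, hje] at hp
    calc ddist A u w ≤ ((j - 0 : ℕ) : ℕ∞) := ddist_le_of_path hp
      _ ≤ _ := by exact_mod_cast (by omega : j - 0 ≤ n + 1)
  · push_neg at hw
    have hp := hasPathN_of_nat (A := A) (F := fun j => if j ≤ n then F j else w) (n := n+1)
      (by
        intro j hj
        by_cases h' : j < n
        · simp only []
          rw [if_pos (by omega), if_pos (by omega)]
          exact hch j h'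
        · have : j = n := by omega
          subst this
          simp only []
          rw [if_pos le_rfl, if_neg (by omega), hFn]
          exact ha)
      (by
        intro i hi j hj he
        try simp only [] at he
        split_ifs at he with h1 h2 h2
        · exact hinj i h1 j h2 he
        · exact absurd he (hw i h1)
        · exact absurd he.symm (hw j h2)
        · omega)
    simp only [if_pos (Nat.zero_le n)] at hp
    rw [hF0] at hp
    have : ¬ (n + 1 ≤ n) := by omega
    rw [if_neg this] at hp
    exact ddist_le_of_path hp



lemma natInjOn_of_ddist {v : V} {G : ℕ → V} {n : ℕ} (D : ℕ → ℕ)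
    (h : ∀ i, i ≤ n → ddist A v (G i) = (D i : ℕ∞))
    (hD : ∀ i, i ≤ n → ∀ j, j ≤ n → D i = D j → i = j) : NatInjOn G n := by
  intro i hi j hj he
  refine hD i hi j hj ?_
  have h1 := h i hi
  rw [he, h j hj] at h1
  exact_mod_cast h1.symm

lemma exact_dist {u z : V} {m : ℕ} {F : ℕ → V} (hF0 : F 0 = u) (hFm : F m = z)
    (hch : NatChain A F m) (hinj : NatInjOn F m) (hd : ddist A u z = (m : ℕ∞)) :
    ∀ j, j ≤ m → ddist A u (F j) = (j : ℕ∞) := by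
  intro j hj
  have hle : ddist A u (F j) ≤ (j : ℕ∞) := by
    have hp := subpath_nat hch hinj (Nat.zero_le j) hj
    rw [hF0] at hp
    have := ddist_le_of_path hp
    simpa using this
  obtain ⟨c, hcj, hpc, hdc⟩ := exists_path_of_ddist_le hle
  rw [hdc]
  norm_cast
  by_contra hne
  have hcl : c < j := lt_of_le_of_ne hcj hne
  have step : ∀ t, j + t ≤ m → ddist A u (F (j+t)) ≤ ((c + t : ℕ) : ℕ∞) := by
    intro t
    induction t with
    | zero => intro _; simpa using hdc.le
    | succ t ih =>
      intro h
      obtain ⟨c', hc', hpc', _⟩ := exists_path_of_ddist_le (ih (by omega))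
      have harc : A (F (j+t)) (F (j+t+1)) := hch _ (by omega)
      have h2 := snoc_ddist hpc' harc
      have e : j + (t+1) = j + t + 1 := by omega
      rw [e]
      calc ddist A u (F (j+t+1)) ≤ ((c'+1 : ℕ) : ℕ∞) := h2
        _ ≤ _ := by exact_mod_cast (by omega : c' + 1 ≤ c + (t+1))
  have hfin := step (m - j) (by omega)
  rw [show j + (m-j) = m from by omega, hFm, hd] at hfin
  have : m ≤ c + (m - j) := by exact_mod_cast hfin
  omega

lemma shortcut_nat {F : ℕ → V} {n a b : ℕ} (hch : NatChain A F n) (hinj : NatInjOn F n)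
    (hab : a + 2 ≤ b) (hbn : b ≤ n) (harc : A (F a) (F b)) :
    HasPathN A (F 0) (F n) (n - (b - a) + 1) := by
  set c := b - a - 1 with hc
  set n' := n - (b - a) + 1 with hn'
  have hp := hasPathN_of_nat (A := A) (F := fun j => if j ≤ a then F j else F (j + c)) (n := n')
    (by
      intro j hj
      show A (if j ≤ a then F j else F (j + c)) (if j + 1 ≤ a then F (j+1) else F (j + 1 + c))
      rcases lt_trichotomy j a with h' | h' | h'
      · rw [if_pos (by omega), if_pos (by omega)]
        exact hch j (by omega)
      · subst h'
        rw [if_pos le_rfl, if_neg (by omega)]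
        have e : j + 1 + c = b := by omega
        rw [e]
        exact harc
      · rw [if_neg (by omega), if_neg (by omega)]
        have e : j + 1 + c = (j + c) + 1 := by omega
        rw [e]
        exact hch (j + c) (by omega))
    (by
      intro i hi j hj he
      try simp only [] at he
      split_ifs at he with h1 h2 h2
      · exact hinj i (by omega) j (by omega) he
      · have := hinj i (by omega) (j + c) (by omega) he
        omega
      · have := hinj (i + c) (by omega) j (by omega) he
        omega
      · have := hinj (i + c) (by omega) (j + c) (by omega) he
        omega)
  have e0 : (if (0:ℕ) ≤ a then F 0 else F (0 + c)) = F 0 := by rw [if_pos (Nat.zero_le a)]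
  have e1 : (if n' ≤ a then F n' else F (n' + c)) = F n := by
    rw [if_neg (by omega)]
    congr 1
    omega
  rw [e0, e1] at hp
  exact hp

lemma ne_of_ddist {v x y : V} {a b : ℕ} (hx : ddist A v x = (a : ℕ∞))
    (hy : ddist A v y = (b : ℕ∞)) (hab : a ≠ b) : x ≠ y := by
  intro he
  rw [he, hy] at hx
  exact hab (by exact_mod_cast hx.symm)

lemma key {k : ℕ} (hk : 4 ≤ k) (hke : Even k) (hqt : KQuasiTrans A k)
    {v w : V} (hd : ddist A v w = ((k + 2 : ℕ) : ℕ∞)) :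
    A w v ∧ (∀ z (m : ℕ), 1 ≤ m → m + 1 ≤ k → ddist A v z = (m : ℕ∞) → A w z) ∧
      (∀ z (m : ℕ), k ≤ m → m ≤ k + 1 → ddist A v z = (m : ℕ∞) →
        ddist A w z ≤ ((2 : ℕ) : ℕ∞)) := by
  obtain ⟨m0, hm0le, hp0, hd0⟩ := exists_path_of_ddist_le hd.le
  have hm0 : m0 = k + 2 := by
    have h2 : (m0 : ℕ∞) = ((k+2 : ℕ) : ℕ∞) := hd0.symm.trans hd
    exact_mod_cast h2
  subst hm0
  obtain ⟨F, hF0, hFw, hch, hinj⟩ := nat_of_hasPathN hp0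
  have hdF : ∀ j, j ≤ k + 2 → ddist A v (F j) = (j : ℕ∞) :=
    exact_dist hF0 hFw hch hinj hd
  have hns : ∀ m', HasPathN A v w m' → k + 2 ≤ m' := by
    intro m' hp
    have h1 := ddist_le_of_path hp
    rw [hd] at h1
    exact_mod_cast h1
  have noup : ∀ a b, a + 2 ≤ b → b ≤ k + 2 → ¬ A (F a) (F b) := by
    intro a b h2 hb harc
    have hp := shortcut_nat hch hinj h2 hb harc
    rw [hF0, hFw] at hp
    have := hns _ hp
    omega
  have hback : ∀ a, a ≤ 2 → A (F (a + k)) (F a) := by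
    intro a ha
    have hp : HasPathN A (F a) (F (a + k)) k := by
      have := subpath_nat hch hinj (show a ≤ a + k by omega) (by omega)
      have e : a + k - a = k := by omega
      rw [e] at this
      exact this
    rcases hqt _ _ hp with h | h
    · exact absurd h (noup a (a + k) (by omega) (by omega))
    · exact h
  have excl : ∀ a, a ≤ k → ¬ A (F a) w := by
    intro a ha harc
    have hp := hasPathN_of_nat (A := A) (F := fun j => if j ≤ a then F j else w) (n := a + 1)
      (by
        intro j hj
        show A (if j ≤ a then F j else w) (if j + 1 ≤ a then F (j+1) else w)
        by_cases h' : j < a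
        · rw [if_pos (by omega), if_pos (by omega)]
          exact hch j (by omega)
        · have : j = a := by omega
          subst this
          rw [if_pos le_rfl, if_neg (by omega)]
          exact harc)
      (by
        refine natInjOn_of_ddist (A := A) (v := v) (fun j => if j ≤ a then j else k + 2) ?_ ?_
        · intro i hi
          show ddist A v (if i ≤ a then F i else w) = ((if i ≤ a then i else k + 2 : ℕ) : ℕ∞)
          by_cases h' : i ≤ a
          · rw [if_pos h', if_pos h']
            exact hdF i (by omega)
          · rw [if_neg h', if_neg h']
            exact hd
        · intro i hi j hj he
          try simp only [] at he
          split_ifs at he <;> omega)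
    have e0 : (if (0:ℕ) ≤ a then F 0 else w) = v := by rw [if_pos (Nat.zero_le a)]; exact hF0
    have e1 : (if a + 1 ≤ a then F (a+1) else w) = w := by rw [if_neg (by omega)]
    rw [e0, e1] at hp
    have := hns _ hp
    omega
  have wx2 : A w (F 2) := by
    have := hback 2 le_rfl
    rw [show 2 + k = k + 2 from by omega, hFw] at this
    exact this
  have back0 : A (F k) (F 0) := by
    have := hback 0 (by omega)
    rw [show 0 + k = k from by omega] at this
    exact this
  have back1 : A (F (k+1)) (F 1) := by
    have := hback 1 (by omega)
    rw [show 1 + k = k + 1 from by omega] at this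
    exact this
  have hvwne : v ≠ w := by
    intro he
    rw [← he, ddist_self] at hd
    have : (0 : ℕ) = k + 2 := by exact_mod_cast hd
    omega
  have wv : A w v := by
    have hp := hasPathN_of_nat (A := A)
        (F := fun j => if j = 0 then w else if j ≤ k - 1 then F (j+1) else F 0) (n := k)
      (by
        intro j hj
        show A (if j = 0 then w else if j ≤ k - 1 then F (j+1) else F 0)
             (if j + 1 = 0 then w else if j + 1 ≤ k - 1 then F (j+1+1) else F 0)
        by_cases h0 : j = 0
        · subst h0
          rw [if_pos rfl, if_neg (by omega), if_pos (by omega),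
              show (0:ℕ)+1+1 = 2 from rfl]
          exact wx2
        · by_cases h1 : j ≤ k - 2
          · rw [if_neg h0, if_pos (by omega), if_neg (by omega), if_pos (by omega)]
            exact hch (j+1) (by omega)
          · have : j = k - 1 := by omega
            subst this
            rw [if_neg h0, if_pos le_rfl, if_neg (by omega), if_neg (by omega),
                show k - 1 + 1 = k from by omega]
            exact back0)
      (by
        refine natInjOn_of_ddist (A := A) (v := v)
          (fun j => if j = 0 then k + 2 else if j ≤ k - 1 then j + 1 else 0) ?_ ?_
        · intro i hi
          show ddist A v (if i = 0 then w else if i ≤ k - 1 then F (i+1) else F 0)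
             = ((if i = 0 then k + 2 else if i ≤ k - 1 then i + 1 else 0 : ℕ) : ℕ∞)
          by_cases h0 : i = 0
          · rw [if_pos h0, if_pos h0]; exact hd
          · by_cases h1 : i ≤ k - 1
            · rw [if_neg h0, if_pos h1, if_neg h0, if_pos h1]
              exact hdF (i+1) (by omega)
            · rw [if_neg h0, if_neg h1, if_neg h0, if_neg h1]
              exact hdF 0 (by omega)
        · intro i hi j hj he
          try simp only [] at he
          split_ifs at he <;> omega)
    have e0 : (if (0:ℕ) = 0 then w else if (0:ℕ) ≤ k - 1 then F 1 else F 0) = w := by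
      rw [if_pos rfl]
    have e1 : (if k = 0 then w else if k ≤ k - 1 then F (k+1) else F 0) = v := by
      rw [if_neg (by omega), if_neg (by omega)]; exact hF0
    rw [e0, e1] at hp
    rcases hqt _ _ hp with h | h
    · exact h
    · exfalso
      have := hns 1 (path_one h hvwne)
      omega
  have w1 : A w (F (k - 1)) := by
    have hp := hasPathN_of_nat (A := A)
        (F := fun j => if j = 0 then w else F (j - 1)) (n := k)
      (by
        intro j hj
        show A (if j = 0 then w else F (j-1)) (if j + 1 = 0 then w else F (j+1-1))
        by_cases h0 : j = 0
        · subst h0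
          rw [if_pos rfl, if_neg (by omega), show (0:ℕ)+1-1 = 0 from rfl, hF0]
          exact wv
        · rw [if_neg h0, if_neg (by omega), show j+1-1 = (j-1)+1 from by omega]
          exact hch (j-1) (by omega))
      (by
        refine natInjOn_of_ddist (A := A) (v := v)
          (fun j => if j = 0 then k + 2 else j - 1) ?_ ?_
        · intro i hi
          show ddist A v (if i = 0 then w else F (i-1))
             = ((if i = 0 then k + 2 else i - 1 : ℕ) : ℕ∞)
          by_cases h0 : i = 0
          · rw [if_pos h0, if_pos h0]; exact hd
          · rw [if_neg h0, if_neg h0]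
            exact hdF (i-1) (by omega)
        · intro i hi j hj he
          try simp only [] at he
          split_ifs at he <;> omega)
    have e0 : (if (0:ℕ) = 0 then w else F (0-1)) = w := by rw [if_pos rfl]
    have e1 : (if k = 0 then w else F (k-1)) = F (k-1) := by rw [if_neg (by omega)]
    rw [e0, e1] at hp
    rcases hqt _ _ hp with h | h
    · exact h
    · exact absurd h (excl (k-1) (by omega))
  have rotstep : ∀ a, 3 ≤ a → a ≤ k → A w (F a) → A w (F (a - 2)) := by
    intro a ha3 hak harc
    have hp := hasPathN_of_nat (A := A)
        (F := fun j => if j = 0 then w else if j ≤ k + 2 - a then F (a + j - 1)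
          else F (j - (k + 2 - a))) (n := k)
      (by
        intro j hj
        show A (if j = 0 then w else if j ≤ k + 2 - a then F (a + j - 1) else F (j - (k + 2 - a)))
          (if j + 1 = 0 then w else if j + 1 ≤ k + 2 - a then F (a + (j+1) - 1)
            else F (j + 1 - (k + 2 - a)))
        by_cases h0 : j = 0
        · subst h0
          rw [if_pos rfl, if_neg (by omega), if_pos (by omega),
              show a + (0+1) - 1 = a from by omega]
          exact harc
        · by_cases h1 : j + 1 ≤ k + 2 - a
          · rw [if_neg h0, if_pos (by omega), if_neg (by omega), if_pos h1,
                show a + (j+1) - 1 = (a + j - 1) + 1 from by omega]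
            exact hch (a + j - 1) (by omega)
          · by_cases h2 : j ≤ k + 2 - a
            · have hje : j = k + 2 - a := by omega
              rw [if_neg h0, if_pos h2, if_neg (by omega), if_neg h1,
                  show a + j - 1 = k + 1 from by omega,
                  show j + 1 - (k + 2 - a) = 1 from by omega]
              exact back1
            · rw [if_neg h0, if_neg h2, if_neg (by omega), if_neg h1,
                  show j + 1 - (k + 2 - a) = (j - (k + 2 - a)) + 1 from by omega]
              exact hch (j - (k + 2 - a)) (by omega))
      (by
        refine natInjOn_of_ddist (A := A) (v := v)
          (fun j => if j = 0 then k + 2 else if j ≤ k + 2 - a then a + j - 1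
            else j - (k + 2 - a)) ?_ ?_
        · intro i hi
          show ddist A v (if i = 0 then w else if i ≤ k + 2 - a then F (a + i - 1)
              else F (i - (k + 2 - a)))
            = ((if i = 0 then k + 2 else if i ≤ k + 2 - a then a + i - 1
              else i - (k + 2 - a) : ℕ) : ℕ∞)
          by_cases h0 : i = 0
          · rw [if_pos h0, if_pos h0]; exact hd
          · by_cases h1 : i ≤ k + 2 - a
            · rw [if_neg h0, if_pos h1, if_neg h0, if_pos h1]
              exact hdF (a + i - 1) (by omega)
            · rw [if_neg h0, if_neg h1, if_neg h0, if_neg h1]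
              exact hdF (i - (k + 2 - a)) (by omega)
        · intro i hi j hj he
          try simp only [] at he
          split_ifs at he <;> omega)
    have e0 : (if (0:ℕ) = 0 then w else if (0:ℕ) ≤ k + 2 - a then F (a + 0 - 1)
        else F (0 - (k + 2 - a))) = w := by rw [if_pos rfl]
    have e1 : (if k = 0 then w else if k ≤ k + 2 - a then F (a + k - 1)
        else F (k - (k + 2 - a))) = F (a - 2) := by
      rw [if_neg (by omega), if_neg (by omega), show k - (k + 2 - a) = a - 2 from by omega]
    rw [e0, e1] at hp
    rcases hqt _ _ hp with h | h
    · exact h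
    · exact absurd h (excl (a - 2) (by omega))
  have rot1 : A w (F 1) → A w (F k) := by
    intro h1
    have hp := hasPathN_of_nat (A := A)
        (F := fun j => if j = 0 then w else F j) (n := k)
      (by
        intro j hj
        show A (if j = 0 then w else F j) (if j + 1 = 0 then w else F (j+1))
        by_cases h0 : j = 0
        · subst h0
          rw [if_pos rfl, if_neg (by omega)]
          exact h1
        · rw [if_neg h0, if_neg (by omega)]
          exact hch j (by omega))
      (by
        refine natInjOn_of_ddist (A := A) (v := v) (fun j => if j = 0 then k + 2 else j) ?_ ?_
        · intro i hi
          show ddist A v (if i = 0 then w else F i)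
            = ((if i = 0 then k + 2 else i : ℕ) : ℕ∞)
          by_cases h0 : i = 0
          · rw [if_pos h0, if_pos h0]; exact hd
          · rw [if_neg h0, if_neg h0]; exact hdF i (by omega)
        · intro i hi j hj he
          try simp only [] at he
          split_ifs at he <;> omega)
    have e0 : (if (0:ℕ) = 0 then w else F 0) = w := by rw [if_pos rfl]
    have e1 : (if k = 0 then w else F k) = F k := by rw [if_neg (by omega)]
    rw [e0, e1] at hp
    rcases hqt _ _ hp with h | h
    · exact h
    · exact absurd h (excl k le_rfl)
  obtain ⟨K, hK⟩ := hke
  have hodd : ∀ t, 2*t + 2 ≤ k → A w (F (k - 1 - 2*t)) := by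
    intro t
    induction t with
    | zero =>
      intro _
      rw [show k - 1 - 2*0 = k - 1 from by omega]
      exact w1
    | succ t ih =>
      intro h2
      have ha := ih (by omega)
      have hr := rotstep (k - 1 - 2*t) (by omega) (by omega) ha
      rw [show k - 1 - 2*t - 2 = k - 1 - 2*(t+1) from by omega] at hr
      exact hr
  have wF1 : A w (F 1) := by
    have := hodd (K - 1) (by omega)
    rw [show k - 1 - 2*(K-1) = 1 from by omega] at this
    exact this
  have wFk : A w (F k) := rot1 wF1
  have heven : ∀ t, 2*t + 2 ≤ k → A w (F (k - 2*t)) := by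
    intro t
    induction t with
    | zero =>
      intro _
      rw [show k - 2*0 = k from by omega]
      exact wFk
    | succ t ih =>
      intro h2
      have ha := ih (by omega)
      have hr := rotstep (k - 2*t) (by omega) (by omega) ha
      rw [show k - 2*t - 2 = k - 2*(t+1) from by omega] at hr
      exact hr
  have warc : ∀ j, 1 ≤ j → j ≤ k → A w (F j) := by
    intro j h1 h2
    rcases Nat.even_or_odd j with he | ho
    · obtain ⟨b, hb⟩ := he
      have := heven (K - b) (by omega)
      rw [show k - 2*(K - b) = j from by omega] at this
      exact this
    · obtain ⟨b, hb⟩ := ho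
      have := hodd (K - 1 - b) (by omega)
      rw [show k - 1 - 2*(K - 1 - b) = j from by omega] at this
      exact this
  have main2 : ∀ z (m : ℕ), 1 ≤ m → m + 1 ≤ k → ddist A v z = (m : ℕ∞) → A w z := by
    intro z m h1 hmk hz
    obtain ⟨m', hm'le, hpz, hdz'⟩ := exists_path_of_ddist_le hz.le
    have hmm : m' = m := by rw [hdz'] at hz; exact_mod_cast hz
    obtain ⟨Gz, hGz0, hGzm, hchz, hinjz⟩ := nat_of_hasPathN hpz
    have hdz : ∀ i, i ≤ m' → ddist A v (Gz i) = (i : ℕ∞) :=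
      exact_dist hGz0 hGzm hchz hinjz hdz'
    have hp := hasPathN_of_nat (A := A)
        (F := fun j => if j = 0 then w else if j ≤ k - 1 - m' then F (m' + 1 + j)
          else Gz (j - (k - m'))) (n := k)
      (by
        intro j hj
        show A (if j = 0 then w else if j ≤ k - 1 - m' then F (m' + 1 + j) else Gz (j - (k - m')))
          (if j + 1 = 0 then w else if j + 1 ≤ k - 1 - m' then F (m' + 1 + (j+1))
            else Gz (j + 1 - (k - m')))
        by_cases h0 : j = 0
        · subst h0
          rw [if_pos rfl, if_neg (by omega)]
          by_cases hm2 : 1 ≤ k - 1 - m'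
          · rw [if_pos (by omega), show m' + 1 + (0 + 1) = m' + 2 from by omega]
            exact warc (m' + 2) (by omega) (by omega)
          · rw [if_neg (by omega), show (0:ℕ) + 1 - (k - m') = 0 from by omega, hGz0]
            exact wv
        · by_cases h1 : j + 1 ≤ k - 1 - m'
          · rw [if_neg h0, if_pos (by omega), if_neg (by omega), if_pos h1,
                show m' + 1 + (j+1) = (m' + 1 + j) + 1 from by omega]
            exact hch (m' + 1 + j) (by omega)
          · by_cases h2 : j ≤ k - 1 - m'
            · -- j = k - 1 - m' ≥ 1
              rw [if_neg h0, if_pos h2, if_neg (by omega), if_neg h1,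
                  show m' + 1 + j = k from by omega,
                  show j + 1 - (k - m') = 0 from by omega, hGz0, ← hF0]
              exact back0
            · rw [if_neg h0, if_neg h2, if_neg (by omega), if_neg h1,
                  show j + 1 - (k - m') = (j - (k - m')) + 1 from by omega]
              exact hchz (j - (k - m')) (by omega))
      (by
        refine natInjOn_of_ddist (A := A) (v := v)
          (fun j => if j = 0 then k + 2 else if j ≤ k - 1 - m' then m' + 1 + j
            else j - (k - m')) ?_ ?_
        · intro i hi
          show ddist A v (if i = 0 then w else if i ≤ k - 1 - m' then F (m' + 1 + i)
              else Gz (i - (k - m')))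
            = ((if i = 0 then k + 2 else if i ≤ k - 1 - m' then m' + 1 + i
              else i - (k - m') : ℕ) : ℕ∞)
          by_cases h0 : i = 0
          · rw [if_pos h0, if_pos h0]; exact hd
          · by_cases h1 : i ≤ k - 1 - m'
            · rw [if_neg h0, if_pos h1, if_neg h0, if_pos h1]
              exact hdF (m' + 1 + i) (by omega)
            · rw [if_neg h0, if_neg h1, if_neg h0, if_neg h1]
              exact hdz (i - (k - m')) (by omega)
        · intro i hi j hj he
          try simp only [] at he
          split_ifs at he <;> omega)
    have e0 : (if (0:ℕ) = 0 then w else if (0:ℕ) ≤ k - 1 - m' then F (m' + 1 + 0)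
        else Gz (0 - (k - m'))) = w := by rw [if_pos rfl]
    have e1 : (if k = 0 then w else if k ≤ k - 1 - m' then F (m' + 1 + k)
        else Gz (k - (k - m'))) = z := by
      rw [if_neg (by omega), if_neg (by omega), show k - (k - m') = m' from by omega]
      exact hGzm
    rw [e0, e1] at hp
    rcases hqt _ _ hp with h | h
    · exact h
    · exfalso
      have hle := snoc_ddist hpz h
      rw [hd] at hle
      have : k + 2 ≤ m' + 1 := by exact_mod_cast hle
      omega
  have main3 : ∀ z (m : ℕ), k ≤ m → m ≤ k + 1 → ddist A v z = (m : ℕ∞) →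
      ddist A w z ≤ ((2 : ℕ) : ℕ∞) := by
    intro z m hk1 hk2 hz
    obtain ⟨m', hm'le, hpz, hdz'⟩ := exists_path_of_ddist_le hz.le
    have hmm : m' = m := by rw [hdz'] at hz; exact_mod_cast hz
    obtain ⟨Gz, hGz0, hGzm, hchz, hinjz⟩ := nat_of_hasPathN hpz
    have hdz : ∀ i, i ≤ m' → ddist A v (Gz i) = (i : ℕ∞) :=
      exact_dist hGz0 hGzm hchz hinjz hdz'
    rcases Nat.eq_or_lt_of_le hk1 with he | hlt
    · -- m = k
      have h3 : A w (Gz (k-1)) :=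
        main2 (Gz (k-1)) (k-1) (by omega) (by omega) (hdz (k-1) (by omega))
      have harc : A (Gz (k-1)) (Gz k) := by
        have := hchz (k-1) (by omega)
        rw [show k - 1 + 1 = k from by omega] at this
        exact this
      have hzk : Gz k = z := by
        rw [show k = m' from by omega]
        exact hGzm
      have harc2 : A (Gz (k-1)) z := hzk ▸ harc
      have hne1 : w ≠ Gz (k-1) := ne_of_ddist hd (hdz (k-1) (by omega)) (by omega)
      have hne2 : Gz (k-1) ≠ z := ne_of_ddist (hdz (k-1) (by omega)) hdz' (by omega)
      have hne3 : w ≠ z := ne_of_ddist hd hdz' (by omega)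
      exact ddist_le_of_path (path_two h3 harc2 hne1 hne2 hne3)
    · -- m = k + 1
      have hm : m' = k + 1 := by omega
      have h1z : A w (Gz 1) := main2 (Gz 1) 1 le_rfl (by omega) (hdz 1 (by omega))
      have hp := hasPathN_of_nat (A := A) (F := fun j => if j = 0 then w else Gz j) (n := k)
        (by
          intro j hj
          show A (if j = 0 then w else Gz j) (if j + 1 = 0 then w else Gz (j+1))
          by_cases h0 : j = 0
          · subst h0
            rw [if_pos rfl, if_neg (by omega)]
            exact h1z
          · rw [if_neg h0, if_neg (by omega)]
            exact hchz j (by omega))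
        (by
          refine natInjOn_of_ddist (A := A) (v := v) (fun j => if j = 0 then k + 2 else j) ?_ ?_
          · intro i hi
            show ddist A v (if i = 0 then w else Gz i)
              = ((if i = 0 then k + 2 else i : ℕ) : ℕ∞)
            by_cases h0 : i = 0
            · rw [if_pos h0, if_pos h0]; exact hd
            · rw [if_neg h0, if_neg h0]; exact hdz i (by omega)
          · intro i hi j hj he
            try simp only [] at he
            split_ifs at he <;> omega)
      have e0 : (if (0:ℕ) = 0 then w else Gz 0) = w := by rw [if_pos rfl]
      have e1 : (if k = 0 then w else Gz k) = Gz k := by rw [if_neg (by omega)]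
      rw [e0, e1] at hp
      rcases hqt _ _ hp with h4 | h4
      · have harc2 : A (Gz k) z := by
          have := hchz k (by omega)
          rw [show k + 1 = m' from by omega, hGzm] at this
          exact this
        have hne1 : w ≠ Gz k := ne_of_ddist hd (hdz k (by omega)) (by omega)
        have hne2 : Gz k ≠ z := ne_of_ddist (hdz k (by omega)) hdz' (by omega)
        have hne3 : w ≠ z := ne_of_ddist hd hdz' (by omega)
        exact ddist_le_of_path (path_two h4 harc2 hne1 hne2 hne3)
      · exfalso
        have hsub := subpath_nat hchz hinjz (Nat.zero_le k) (by omega : k ≤ m')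
        rw [hGz0] at hsub
        have hsub2 : HasPathN A v (Gz k) k := by simpa using hsub
        have hle := snoc_ddist hsub2 h4
        rw [hd] at hle
        have : k + 2 ≤ k + 1 := by exact_mod_cast hle
        omega
  exact ⟨wv, main2, main3⟩






end Helpers


/-- even `k ≥ 4`; if `v` is a `(k+2)`-king but not a `(k+1)`-king, then some
vertex at distance `k+2` from `v` is a `2`-king, and the set of vertices at distance `k+2`
from `v` induces a semicomplete subdigraph. -/
theorem kqt_even_two_king_semicomplete
    [Fintype V] (A : V → V → Prop) (hloop : ∀ v : V, ¬ A v v)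
    (k : ℕ) (hk : 4 ≤ k) (hke : Even k) (hqt : KQuasiTrans A k)
    (v : V) (hv : IsRKing A (k + 2) v) (hnv : ¬ IsRKing A (k + 1) v) :
    (∃ u : V, ddist A v u = ((k : ℕ∞) + 2) ∧ IsRKing A 2 u) ∧
      (∀ x ∈ {w : V | ddist A v w = ((k : ℕ∞) + 2)},
        ∀ y ∈ {w : V | ddist A v w = ((k : ℕ∞) + 2)},
          x ≠ y → A x y ∨ A y x) := by
  classical
  have hcast : ((k : ℕ∞) + 2) = ((k + 2 : ℕ) : ℕ∞) := by push_cast; ring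
  set S : Set V := {w : V | ddist A v w = ((k : ℕ∞) + 2)} with hS
  have hmemS : ∀ w, w ∈ S ↔ ddist A v w = ((k + 2 : ℕ) : ℕ∞) := by
    intro w
    rw [hS]
    simp only [Set.mem_setOf_eq, hcast]
  have hall : ∀ z, ∃ m : ℕ, m ≤ k + 2 ∧ ddist A v z = (m : ℕ∞) := by
    intro z
    obtain ⟨m, hm, _, he⟩ := exists_path_of_ddist_le (hv z)
    exact ⟨m, hm, he⟩
  -- semicompleteness of S
  have semi : ∀ x, ddist A v x = ((k + 2 : ℕ) : ℕ∞) →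
      ∀ y, ddist A v y = ((k + 2 : ℕ) : ℕ∞) → x ≠ y → A x y ∨ A y x := by
    intro x hx y hy hxy
    obtain ⟨-, k2x, -⟩ := key hk hke hqt hx
    obtain ⟨m', hm'le, hpy, hdy'⟩ := exists_path_of_ddist_le hy.le
    have hmm : m' = k + 2 := by
      have h2 : (m' : ℕ∞) = ((k + 2 : ℕ) : ℕ∞) := hdy'.symm.trans hy
      exact_mod_cast h2
    subst hmm
    obtain ⟨Gy, hGy0, hGym, hchy, hinjy⟩ := nat_of_hasPathN hpy
    have hdy : ∀ i, i ≤ k + 2 → ddist A v (Gy i) = (i : ℕ∞) :=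
      exact_dist hGy0 hGym hchy hinjy hdy'
    have hx3 : A x (Gy 3) := k2x (Gy 3) 3 (by omega) (by omega) (hdy 3 (by omega))
    have hp := hasPathN_of_nat (A := A)
        (F := fun j => if j = 0 then x else Gy (j + 2)) (n := k)
      (by
        intro j hj
        show A (if j = 0 then x else Gy (j + 2)) (if j + 1 = 0 then x else Gy (j + 1 + 2))
        by_cases h0 : j = 0
        · subst h0
          rw [if_pos rfl, if_neg (by omega), show (0:ℕ) + 1 + 2 = 3 from rfl]
          exact hx3
        · rw [if_neg h0, if_neg (by omega), show j + 1 + 2 = (j + 2) + 1 from by omega]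
          exact hchy (j + 2) (by omega))
      (by
        intro i hi j hj he
        try simp only [] at he
        by_cases h0 : i = 0 <;> by_cases h1 : j = 0
        · omega
        · exfalso
          rw [if_pos h0, if_neg h1] at he
          by_cases hjk : j = k
          · subst hjk
            rw [hGym] at he
            exact hxy he
          · exact (ne_of_ddist hx (hdy (j + 2) (by omega)) (by omega)) he
        · exfalso
          rw [if_neg h0, if_pos h1] at he
          by_cases hik : i = k
          · subst hik
            rw [hGym] at he
            exact hxy he.symm
          · exact (ne_of_ddist hx (hdy (i + 2) (by omega)) (by omega)) he.symm
        · rw [if_neg h0, if_neg h1] at he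
          have := hinjy (i + 2) (by omega) (j + 2) (by omega) he
          omega)
    have e0 : (if (0:ℕ) = 0 then x else Gy (0 + 2)) = x := by rw [if_pos rfl]
    have e1 : (if k = 0 then x else Gy (k + 2)) = y := by
      rw [if_neg (by omega)]; exact hGym
    rw [e0, e1] at hp
    exact hqt _ _ hp
  -- S is nonempty
  have hex : ∃ z, ¬ ddist A v z ≤ ((k + 1 : ℕ) : ℕ∞) := by
    by_contra hc
    push_neg at hc
    exact hnv (fun z => by exact_mod_cast hc z)
  obtain ⟨z0, hz0⟩ := hex
  obtain ⟨m0, hm0, hdm0⟩ := hall z0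
  have hm02 : m0 = k + 2 := by
    by_contra h
    apply hz0
    rw [hdm0]
    exact Nat.cast_le.mpr (by omega)
  have hw0 : ddist A v z0 = ((k + 2 : ℕ) : ℕ∞) := by rw [hdm0, hm02]
  have hSne : S.Nonempty := ⟨z0, (hmemS z0).mpr hw0⟩
  obtain ⟨u, huS, humax⟩ := Set.exists_max_image S (outDegIn A S) (Set.toFinite S) hSne
  have hu : ddist A v u = ((k + 2 : ℕ) : ℕ∞) := (hmemS u).mp huS
  obtain ⟨ku1, ku2, ku3⟩ := key hk hke hqt hu
  -- Moon's argument: u reaches every vertex of S within 2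
  have moon : ∀ z, ddist A v z = ((k + 2 : ℕ) : ℕ∞) → ddist A u z ≤ ((2 : ℕ) : ℕ∞) := by
    intro z hz
    by_cases hzu : z = u
    · subst hzu
      rw [ddist_self]
      exact zero_le
    · by_cases huz : A u z
      · have hne : u ≠ z := fun he => hzu he.symm
        exact le_trans (ddist_le_of_path (path_one huz hne)) (Nat.cast_le.mpr (by omega))
      · by_cases hy : ∃ y, y ∈ S ∧ A u y ∧ A y z
        · obtain ⟨y, hyS, h1, h2⟩ := hy
          have hne1 : u ≠ y := fun he => hloop u (by rw [he] at h1 ⊢; exact h1)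
          have hne2 : y ≠ z := fun he => hloop y (by rw [he] at h2 ⊢; exact h2)
          have hne3 : u ≠ z := fun he => hzu he.symm
          exact ddist_le_of_path (path_two h1 h2 hne1 hne2 hne3)
        · exfalso
          push_neg at hy
          have hzu_arc : A z u := by
            rcases semi z hz u hu hzu with h | h
            · exact h
            · exact absurd h huz
          have hsub : insert u {y | y ∈ S ∧ A u y} ⊆ {y | y ∈ S ∧ A z y} := by
            intro y hy'
            rcases Set.mem_insert_iff.mp hy' with rfl | ⟨hyS, hyu⟩
            · exact ⟨huS, hzu_arc⟩
            · refine ⟨hyS, ?_⟩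
              have hyz : ¬ A y z := hy y hyS hyu
              have hne : y ≠ z := by
                intro he
                rw [he] at hyu
                exact huz hyu
              rcases semi y ((hmemS y).mp hyS) z hz hne with h | h
              · exact absurd h hyz
              · exact h
          have hnotmem : u ∉ {y | y ∈ S ∧ A u y} := fun h => hloop u h.2
          have hins : (insert u {y | y ∈ S ∧ A u y}).ncard
              = {y | y ∈ S ∧ A u y}.ncard + 1 :=
            Set.ncard_insert_of_notMem hnotmem (Set.toFinite _)
          have hmono : (insert u {y | y ∈ S ∧ A u y}).ncard ≤ {y | y ∈ S ∧ A z y}.ncard :=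
            Set.ncard_le_ncard hsub (Set.toFinite _)
          have hout_u : outDegIn A S u = {y | y ∈ S ∧ A u y}.ncard := rfl
          have hout_z : outDegIn A S z = {y | y ∈ S ∧ A z y}.ncard := rfl
          have hle := humax z ((hmemS z).mpr hz)
          rw [hout_u, hout_z] at hle
          omega
  -- u is a 2-king
  have hking : IsRKing A 2 u := by
    intro z
    show ddist A u z ≤ ((2 : ℕ) : ℕ∞)
    obtain ⟨m, hm, hdzv⟩ := hall z
    by_cases h0 : m = 0
    · have hz_v : z = v := by
        subst h0
        obtain ⟨m2, hm2, hp2, _⟩ := exists_path_of_ddist_le hdzv.le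
        have hm20 : m2 = 0 := by omega
        subst hm20
        obtain ⟨f, _, hf0, hfl, _⟩ := hp2
        have hfl' : f 0 = z := by
          rw [show (0 : Fin 1) = Fin.last 0 from rfl]
          exact hfl
        exact (hfl'.symm.trans hf0)
      rw [hz_v]
      have hvv : ddist A v v = ((0:ℕ) : ℕ∞) := by simp [ddist_self]
      have hne : u ≠ v := ne_of_ddist hu hvv (by omega)
      exact le_trans (ddist_le_of_path (path_one ku1 hne)) (Nat.cast_le.mpr (by omega))
    · by_cases h1 : m + 1 ≤ k
      · have harc := ku2 z m (by omega) h1 hdzv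
        have hne : u ≠ z := ne_of_ddist hu hdzv (by omega)
        exact le_trans (ddist_le_of_path (path_one harc hne)) (Nat.cast_le.mpr (by omega))
      · by_cases h2 : m ≤ k + 1
        · exact ku3 z m (by omega) h2 hdzv
        · have hm22 : m = k + 2 := by omega
          rw [hm22] at hdzv
          exact moon z hdzv
  refine ⟨⟨u, ?_, hking⟩, ?_⟩
  · rw [hcast]
    exact hu
  · intro x hx y hy hxy
    exact semi x ((hmemS x).mp hx) y ((hmemS y).mp hy) hxy
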